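/- For each fixed non-negative integer k and non-negative integer r, the exponential generating function of the r-Stirling numbers of the second kind satisfies sum_{n>=0} S_r(n+r, k+r) t^n / n! = (1/k!) * e^{rt} * (e^t - 1)^k. -/

import Mathlib

open Finset Real

/-- Stirling numbers of the second kind `S(n, k)`. -/
def stirling2 : ℕ → ℕ → ℕ
  | 0, 0 => 1
  | 0, _ + 1 => 0
  | _ + 1, 0 => 0
  | n + 1, k + 1 => (k + 1) * stirling2 n (k + 1) + stirling2 n k

/-- The `r`-Stirling numbers of the second kind `S_r(n, k)` of Broder: the number of
partitions of `{1, …, n}` into `k` non-empty subsets such that `1, …, r` lie in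
distinct subsets (with the convention `S_r(n, k) = 0` for `n < r`). -/
def rStirling (r : ℕ) : ℕ → ℕ → ℕ
  | 0, k => if r = 0 ∧ k = 0 then 1 else 0
  | n + 1, k =>
    if n + 1 < r then 0
    else if n + 1 = r then (if k = r then 1 else 0)
    else
      match k with
      | 0 => 0
      | k + 1 => (k + 1) * rStirling r n (k + 1) + rStirling r n k

lemma rS_zero (r k : ℕ) : rStirling r 0 k = if r = 0 ∧ k = 0 then 1 else 0 := rfl

lemma rS_succ (r n k : ℕ) : rStirling r (n+1) k =
    if n + 1 < r then 0
    else if n + 1 = r then (if k = r then 1 else 0)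
    else
      match k with
      | 0 => 0
      | k + 1 => (k + 1) * rStirling r n (k + 1) + rStirling r n k := rfl

lemma rStirling_zero_of_lt (r : ℕ) : ∀ n j, j < r → rStirling r n j = 0 := by
  intro n
  induction n with
  | zero =>
    intro j hj
    rw [rS_zero, if_neg (by omega)]
  | succ n ih =>
    intro j hj
    rw [rS_succ]
    rcases Nat.lt_or_ge (n+1) r with h | h
    · rw [if_pos h]
    · rw [if_neg (by omega)]
      rcases Nat.eq_or_lt_of_le h with h2 | h2
      · rw [if_pos h2.symm, if_neg (by omega)]
      · rw [if_neg (by omega)]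
        match j with
        | 0 => rfl
        | j+1 => simp only [ih (j+1) hj, ih j (by omega)]; ring

lemma rStirling_succ_rec (r n j : ℕ) (h : r ≤ n) :
    rStirling r (n+1) (j+1) = (j+1) * rStirling r n (j+1) + rStirling r n j := by
  rw [rS_succ, if_neg (by omega), if_neg (by omega)]

lemma rStirling_self (r j : ℕ) : rStirling r r j = if j = r then 1 else 0 := by
  cases r with
  | zero => rw [rS_zero]; simp
  | succ m => rw [rS_succ, if_neg (lt_irrefl _), if_pos rfl]

lemma G_step (r k n : ℕ) :
    ∑ j ∈ range (k+1+1), (-1:ℤ)^(k+1-j) * ((k+1).choose j) * ((j:ℤ)+r)^(n+1)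
    = ((k:ℤ)+1+r) * ∑ j ∈ range (k+1+1), (-1:ℤ)^(k+1-j) * ((k+1).choose j) * ((j:ℤ)+r)^n
    + ((k:ℤ)+1) * ∑ j ∈ range (k+1), (-1:ℤ)^(k-j) * (k.choose j) * ((j:ℤ)+r)^n := by
  have hext : ((k:ℤ)+1) * ∑ j ∈ range (k+1), (-1:ℤ)^(k-j) * (k.choose j) * ((j:ℤ)+r)^n
      = ∑ j ∈ range (k+2), ((k:ℤ)+1) * ((-1:ℤ)^(k-j) * (k.choose j) * ((j:ℤ)+r)^n) := by
    rw [Finset.sum_range_succ (n := k+1), Nat.choose_succ_self]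
    push_cast
    rw [Finset.mul_sum]
    ring
  rw [hext, Finset.mul_sum, ← Finset.sum_add_distrib]
  apply Finset.sum_congr rfl
  intro j hj
  rw [Finset.mem_range] at hj
  rcases Nat.lt_or_ge j (k+1) with h | h
  · have h1 : k + 1 - j = (k - j) + 1 := by omega
    have h0 := Nat.choose_mul_succ_eq k j
    zify [show j ≤ k + 1 from by omega] at h0
    rw [h1, pow_succ]
    linear_combination (-(-1:ℤ)^(k-j) * ((j:ℤ)+r)^n) * h0
  · have hj' : j = k + 1 := by omega
    subst hj'
    simp [Nat.choose_succ_self, Nat.sub_self]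
    ring


lemma rStirling_key (r : ℕ) : ∀ n k, (Nat.factorial k : ℤ) * rStirling r (n + r) (k + r) =
    ∑ j ∈ Finset.range (k+1), (-1:ℤ)^(k-j) * (Nat.choose k j) * ((j:ℤ) + r)^n := by
  intro n
  induction n with
  | zero =>
    intro k
    simp only [zero_add, rStirling_self, pow_zero, mul_one]
    have hR : ∑ j ∈ Finset.range (k+1), ((-1:ℤ)^(k-j) * (Nat.choose k j))
        = ∑ j ∈ Finset.range (k+1), (-1:ℤ)^j * (Nat.choose k j) := by
      rw [← Finset.sum_range_reflect]
      apply Finset.sum_congr rfl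
      intro j hj
      rw [Finset.mem_range] at hj
      rw [show k + 1 - 1 - j = k - j from by omega, Nat.choose_symm (by omega),
        show k - (k - j) = j from by omega]
    rw [hR, Int.alternating_sum_range_choose]
    rcases Nat.eq_zero_or_pos k with rfl | hk
    · simp
    · rw [if_neg (by omega), if_neg (by omega)]
      simp
  | succ n ih =>
    intro k
    rcases Nat.eq_zero_or_pos (k + r) with hkr | hkr
    · obtain ⟨rfl, rfl⟩ : k = 0 ∧ r = 0 := by omega
      rw [rS_succ, if_neg (by omega), if_neg (by omega)]
      simp
    · obtain ⟨m, hm⟩ : ∃ m, k + r = m + 1 := ⟨k + r - 1, by omega⟩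
      have hrec : rStirling r (n + 1 + r) (k + r)
          = (m+1) * rStirling r (n + r) (m+1) + rStirling r (n + r) m := by
        rw [show n + 1 + r = (n + r) + 1 from by omega, hm]
        exact rStirling_succ_rec r (n + r) m (by omega)
      rw [hrec]
      rcases Nat.eq_zero_or_pos k with rfl | hk
      · -- k = 0, so m + 1 = r
        have hm0 : m < r := by omega
        rw [rStirling_zero_of_lt r (n + r) m hm0]
        have h0 := ih 0
        rw [show m + 1 = 0 + r from by omega]
        simp only [Finset.sum_range_one, Nat.factorial_zero, Nat.cast_zero, Nat.cast_one,
          Nat.sub_self, pow_zero, one_mul, Nat.choose_self, zero_add, add_zero] at h0 ⊢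
        push_cast at h0 ⊢
        rw [h0]
        ring
      · obtain ⟨k', rfl⟩ : ∃ k', k = k' + 1 := ⟨k - 1, by omega⟩
        have hm' : m = k' + r := by omega
        subst hm'
        have h1 := ih (k' + 1)
        have h2 := ih k'
        rw [show k' + 1 + r = k' + r + 1 from by omega] at h1
        push_cast [Nat.factorial_succ] at h1 h2 ⊢
        linear_combination ((k':ℤ)+1+r) * h1 + ((k':ℤ)+1) * h2 - G_step r k' n

theorem rStirling_egf (k r : ℕ) (t : ℝ) :
    HasSum (fun n : ℕ => (rStirling r (n + r) (k + r) : ℝ) * t ^ n / Nat.factorial n)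
      (1 / (Nat.factorial k : ℝ) * Real.exp (r * t) * (Real.exp t - 1) ^ k) := by
  have hfac : (Nat.factorial k : ℝ) ≠ 0 := Nat.cast_ne_zero.mpr (Nat.factorial_ne_zero k)
  have hexp : ∀ j : ℕ, HasSum
      (fun n : ℕ => ((-1:ℝ)^(k-j) * (k.choose j)) * ((((j:ℝ)+r)*t)^n / n.factorial))
      (((-1:ℝ)^(k-j) * (k.choose j)) * Real.exp (((j:ℝ)+r)*t)) := by
    intro j
    have h := NormedSpace.expSeries_div_hasSum_exp (((j:ℝ)+r)*t)
    rw [← Real.exp_eq_exp_ℝ] at h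
    exact h.mul_left _
  have hsum := hasSum_sum (fun j (_ : j ∈ Finset.range (k+1)) => hexp j)
  have htot := hsum.div_const (Nat.factorial k : ℝ)
  have hfun : (fun n : ℕ => (rStirling r (n + r) (k + r) : ℝ) * t ^ n / Nat.factorial n)
      = fun n : ℕ => (∑ j ∈ Finset.range (k+1),
          ((-1:ℝ)^(k-j) * (k.choose j)) * ((((j:ℝ)+r)*t)^n / n.factorial)) / (Nat.factorial k) := by
    funext n
    have hn : (n.factorial : ℝ) ≠ 0 := Nat.cast_ne_zero.mpr (Nat.factorial_ne_zero n)
    have hkey := rStirling_key r n k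
    have hcast : ((Nat.factorial k : ℝ)) * (rStirling r (n + r) (k + r) : ℝ)
        = ∑ j ∈ Finset.range (k+1), (-1:ℝ)^(k-j) * (k.choose j) * ((j:ℝ) + r)^n := by
      exact_mod_cast congrArg (fun z : ℤ => (z : ℝ)) hkey
    have hs : ∑ j ∈ Finset.range (k+1),
          ((-1:ℝ)^(k-j) * (k.choose j)) * ((((j:ℝ)+r)*t)^n / n.factorial)
        = (∑ j ∈ Finset.range (k+1), (-1:ℝ)^(k-j) * (k.choose j) * ((j:ℝ)+r)^n)
            * t^n / n.factorial := by
      rw [Finset.sum_mul, Finset.sum_div]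
      apply Finset.sum_congr rfl
      intro j _
      rw [mul_pow]
      ring
    rw [hs, ← hcast]
    field_simp
  have hval : (∑ j ∈ Finset.range (k+1),
        ((-1:ℝ)^(k-j) * (k.choose j)) * Real.exp (((j:ℝ)+r)*t)) / (Nat.factorial k)
      = 1 / (Nat.factorial k : ℝ) * Real.exp (r * t) * (Real.exp t - 1) ^ k := by
    rw [sub_pow, Finset.mul_sum, Finset.sum_div]
    apply Finset.sum_congr rfl
    intro m hm
    rw [Finset.mem_range] at hm
    rw [one_pow, ← Real.exp_nat_mul,
      show ((m:ℝ) + r) * t = (m:ℝ) * t + r * t from by ring, Real.exp_add,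
      show m + k = (k - m) + 2 * m from by omega, pow_add, pow_mul]
    simp only [neg_one_sq, one_pow, mul_one]
    field_simp
  rw [hfun, ← hval]
  exact htot
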